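/- The planar curve parametrized by (x(t), y(t), z(t)) = (t^{−p₀}cos t, t^{−q₀}sin t, t^{−1}) for t ≥ 1, where 0 < p₀ ≤ q₀ ≤ 1, lies on the surface x²/z^{2p₀} + y²/z^{2q₀} = 1, and after the time rescaling multiplying the vector field by z^{q₀−p₀} it is a trajectory of the system ẋ = −y − p₀xz^{q₀−p₀+1}, ẏ = xz^{2(q₀−p₀)} − q₀yz^{q₀−p₀+1}, ż = −z^{2+q₀−p₀}. -/

import Mathlib

open Real

theorem stmt_16 (p₀ q₀ : ℝ) (hp : 0 < p₀) (hpq : p₀ ≤ q₀) (hq : q₀ ≤ 1)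
    (x y z : ℝ → ℝ)
    (hx : ∀ t : ℝ, x t = t ^ (-p₀) * Real.cos t)
    (hy : ∀ t : ℝ, y t = t ^ (-q₀) * Real.sin t)
    (hz : ∀ t : ℝ, z t = t⁻¹) :
    (∀ t : ℝ, 0 < t →
      x t ^ 2 / z t ^ (2 * p₀) + y t ^ 2 / z t ^ (2 * q₀) = 1) ∧
    (∀ t : ℝ, 1 ≤ t →
      HasDerivAt x (z t ^ (p₀ - q₀) * (-y t - p₀ * x t * z t ^ (q₀ - p₀ + 1))) t ∧
      HasDerivAt y (z t ^ (p₀ - q₀) *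
        (x t * z t ^ (2 * (q₀ - p₀)) - q₀ * y t * z t ^ (q₀ - p₀ + 1))) t ∧
      HasDerivAt z (z t ^ (p₀ - q₀) * (-(z t ^ (2 + q₀ - p₀)))) t) := by
  have hxf : x = fun t : ℝ => t ^ (-p₀) * Real.cos t := funext hx
  have hyf : y = fun t : ℝ => t ^ (-q₀) * Real.sin t := funext hy
  have hzf : z = fun t : ℝ => t⁻¹ := funext hz
  subst hxf hyf hzf
  constructor
  · intro t ht
    have h1 : ∀ r : ℝ, (t⁻¹ : ℝ) ^ r = t ^ (-r) := fun r => by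
      rw [Real.inv_rpow ht.le, ← Real.rpow_neg ht.le]
    simp only [h1, mul_pow]
    rw [← Real.rpow_natCast (t ^ (-p₀)) 2, ← Real.rpow_natCast (t ^ (-q₀)) 2,
      ← Real.rpow_mul ht.le, ← Real.rpow_mul ht.le]
    push_cast
    rw [show -p₀ * 2 = -(2 * p₀) by ring, show -q₀ * 2 = -(2 * q₀) by ring,
      mul_comm (t ^ (-(2 * p₀))), mul_comm (t ^ (-(2 * q₀))), mul_div_assoc, mul_div_assoc,
      div_self (by positivity), div_self (by positivity), mul_one, mul_one]
    exact Real.cos_sq_add_sin_sq t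
  · intro t ht1
    have ht : (0 : ℝ) < t := lt_of_lt_of_le one_pos ht1
    have h1 : ∀ r : ℝ, (t⁻¹ : ℝ) ^ r = t ^ (-r) := fun r => by
      rw [Real.inv_rpow ht.le, ← Real.rpow_neg ht.le]
    have hp' : t ^ p₀ ≠ 0 := by positivity
    have hq' : t ^ q₀ ≠ 0 := by positivity
    have h0 : t ≠ 0 := ht.ne'
    have h2 : t ^ (2 : ℝ) = t * t := by
      rw [show (2 : ℝ) = 1 + 1 by norm_num, Real.rpow_add ht, Real.rpow_one]
    refine ⟨?_, ?_, ?_⟩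
    · have hd := (Real.hasDerivAt_rpow_const (p := -p₀) (Or.inl ht.ne')).fun_mul
        (Real.hasDerivAt_cos t)
      refine hd.congr_deriv (Eq.symm ?_)
      simp only [h1]
      simp only [Real.rpow_add ht, Real.rpow_sub ht, Real.rpow_neg ht.le, Real.rpow_one]
      field_simp
      ring
    · have hd := (Real.hasDerivAt_rpow_const (p := -q₀) (Or.inl ht.ne')).fun_mul
        (Real.hasDerivAt_sin t)
      refine hd.congr_deriv (Eq.symm ?_)
      simp only [h1]
      rw [show -(2 * (q₀ - p₀)) = p₀ - q₀ + (p₀ - q₀) by ring]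
      simp only [Real.rpow_add ht, Real.rpow_sub ht, Real.rpow_neg ht.le, Real.rpow_one]
      field_simp
      ring
    · have hd := hasDerivAt_inv h0
      refine hd.congr_deriv (Eq.symm ?_)
      simp only [h1]
      simp only [Real.rpow_add ht, Real.rpow_sub ht, Real.rpow_neg ht.le, Real.rpow_one, h2]
      field_simp
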